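/- Let K ≥ 1, M ≥ 1, and let the class index set be I = {1, …, K} ∪ {a₁, …, a_M}, with true label y ∈ {1, …, K} and a₀ := y. Let d ≥ 1, let A ⊆ ℝ^d be a set, and let l, u ∈ ℝ^d with l ≤ h ≤ u componentwise for all h ∈ A and l ≤ u. Let W be a real I×d matrix and b ∈ ℝ^I, and for η ∈ 𝒫 and k ∈ I set c_k(η) = Σ_{m=0}^{M} η_m (e_{a_m} − e_k). For each k ∈ I define J_k = min_{η ∈ 𝒫} max_{l ≤ w ≤ u} −c_k(η)ᵀ(W w + b). Then for every h ∈ A, writing z = W h + b, we have min_{0 ≤ m ≤ M} [ −log( exp(z_{a_m}) / ( exp(z_{a_m}) + Σ_{k ∈ {1,…,K}, k ≠ y} exp(z_k) ) ) ] ≤ −log( exp(J_y) / Σ_{k=1}^{K} exp(J_k) ). -/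

import Mathlib

open Matrix Finset

lemma sum_c_mul {I : Type*} [Fintype I] [DecidableEq I] {M : ℕ}
    (a : Fin (M + 1) → I) (η : Fin (M + 1) → ℝ) (hη : ∑ m, η m = 1)
    (k : I) (v : I → ℝ) :
    -(∑ j, (∑ m, η m * ((if j = a m then (1:ℝ) else 0) - (if j = k then (1:ℝ) else 0))) * v j)
      = v k - ∑ m, η m * v (a m) := by
  have h1 : ∀ j, (∑ m, η m * ((if j = a m then (1:ℝ) else 0) - (if j = k then (1:ℝ) else 0))) * v j
      = ∑ m, ((if j = a m then η m * v j else 0) - (if j = k then η m * v j else 0)) := by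
    intro j
    rw [Finset.sum_mul]
    refine Finset.sum_congr rfl fun m _ => ?_
    split_ifs <;> ring
  simp only [h1]
  rw [Finset.sum_comm]
  have h2 : ∀ m, (∑ j, ((if j = a m then η m * v j else 0) - (if j = k then η m * v j else 0)))
      = η m * v (a m) - η m * v k := by
    intro m
    rw [Finset.sum_sub_distrib]
    congr 1 <;> simp [Finset.sum_ite_eq']
  simp only [h2]
  rw [Finset.sum_sub_distrib, ← Finset.sum_mul, hη]
  ring

lemma inner_bddAbove {I : Type*} [Fintype I] {d : ℕ}
    (g : I → ℝ) (W : Matrix I (Fin d) ℝ) (b : I → ℝ) (l u : Fin d → ℝ) :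
    BddAbove {s : ℝ | ∃ w : Fin d → ℝ, (∀ j, l j ≤ w j ∧ w j ≤ u j) ∧
      s = -(∑ j, g j * (W.mulVec w + b) j)} := by
  refine ⟨∑ j, |g j| * ((∑ i, |W j i| * (|l i| + |u i|)) + |b j|), ?_⟩
  rintro s ⟨w, hw, rfl⟩
  have hwabs : ∀ i, |w i| ≤ |l i| + |u i| := by
    intro i
    rw [abs_le]
    constructor
    · have := (hw i).1
      have h2 : -(|l i| + |u i|) ≤ l i := by
        have := neg_abs_le (l i); have := abs_nonneg (u i); linarith
      linarith
    · have := (hw i).2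
      have h2 : u i ≤ |l i| + |u i| := by
        have := le_abs_self (u i); have := abs_nonneg (l i); linarith
      linarith
  calc -(∑ j, g j * (W.mulVec w + b) j) ≤ |∑ j, g j * (W.mulVec w + b) j| := neg_le_abs _
    _ ≤ ∑ j, |g j * (W.mulVec w + b) j| := Finset.abs_sum_le_sum_abs _ _
    _ ≤ ∑ j, |g j| * ((∑ i, |W j i| * (|l i| + |u i|)) + |b j|) := by
        refine Finset.sum_le_sum fun j _ => ?_
        rw [abs_mul]
        refine mul_le_mul_of_nonneg_left ?_ (abs_nonneg _)
        calc |(W.mulVec w + b) j| = |(∑ i, W j i * w i) + b j| := by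
              simp [Matrix.mulVec, dotProduct]
          _ ≤ |∑ i, W j i * w i| + |b j| := abs_add_le _ _
          _ ≤ (∑ i, |W j i * w i|) + |b j| := by
              gcongr; exact Finset.abs_sum_le_sum_abs _ _
          _ ≤ (∑ i, |W j i| * (|l i| + |u i|)) + |b j| := by
              gcongr with i _
              rw [abs_mul]
              exact mul_le_mul_of_nonneg_left (hwabs i) (abs_nonneg _)


/-- Theorem 2 of the paper: the robust-abstain loss — the minimum over
the true class `a₀ = y` and abstain classes `a₁, …, a_M` of the cross-entropy that
excludes the abstain classes from the denominator — is bounded by the loss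
`ℓ_{xent\A₀}(J, y)` computed from the vector of box-relaxed worst-case margins `J_k`.
Classes are modeled as `Fin K ⊕ Fin M` (standard classes `Sum.inl`, abstain classes
`Sum.inr`). -/
theorem robust_abstain_loss_upper_bound
    (K M d : ℕ) (hK : 1 ≤ K) (hM : 1 ≤ M) (hd : 1 ≤ d)
    (y : Fin K)
    (A : Set (Fin d → ℝ)) (l u : Fin d → ℝ)
    (hA : ∀ h ∈ A, ∀ j, l j ≤ h j ∧ h j ≤ u j) (hlu : ∀ j, l j ≤ u j)
    (W : Matrix (Fin K ⊕ Fin M) (Fin d) ℝ) (b : (Fin K ⊕ Fin M) → ℝ)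
    (a : Fin (M + 1) → Fin K ⊕ Fin M)
    (ha : a = fun m => Fin.cases (Sum.inl y) (fun i => Sum.inr i) m)
    (c : (Fin (M + 1) → ℝ) → (Fin K ⊕ Fin M) → (Fin K ⊕ Fin M) → ℝ)
    (hc : c = fun η k j => ∑ m, η m *
      ((if j = a m then (1 : ℝ) else 0) - (if j = k then (1 : ℝ) else 0)))
    (J : (Fin K ⊕ Fin M) → ℝ)
    (hJ : J = fun k => sInf {x : ℝ | ∃ η : Fin (M + 1) → ℝ,
      (∀ m, 0 ≤ η m) ∧ (∑ m, η m) = 1 ∧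
      x = sSup {s : ℝ | ∃ w : Fin d → ℝ, (∀ j, l j ≤ w j ∧ w j ≤ u j) ∧
        s = -(∑ j, c η k j * (W.mulVec w + b) j)}}) :
    ∀ h ∈ A,
      Finset.univ.inf' Finset.univ_nonempty (fun m : Fin (M + 1) =>
        -Real.log (Real.exp ((W.mulVec h + b) (a m)) /
          (Real.exp ((W.mulVec h + b) (a m)) +
            ∑ k ∈ Finset.univ.filter (fun k : Fin K => k ≠ y),
              Real.exp ((W.mulVec h + b) (Sum.inl k))))) ≤
      -Real.log (Real.exp (J (Sum.inl y)) /
          ∑ k : Fin K, Real.exp (J (Sum.inl k))) := by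
  intro h hh
  have hhbox : ∀ j, l j ≤ h j ∧ h j ≤ u j := hA h hh
  have ha0 : a 0 = Sum.inl y := by rw [ha]; rfl
  set z : (Fin K ⊕ Fin M) → ℝ := W.mulVec h + b with hz
  obtain ⟨m', -, hm'⟩ := Finset.exists_max_image (Finset.univ : Finset (Fin (M+1)))
    (fun m => z (a m)) ⟨0, Finset.mem_univ 0⟩
  set t := z (a m') with ht
  -- the canonical simplex vertex η₀ = e₀
  set η₀ : Fin (M+1) → ℝ := fun m => if m = 0 then (1:ℝ) else 0 with hη₀
  have hη₀nn : ∀ m, 0 ≤ η₀ m := by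
    intro m; rw [hη₀]; dsimp only; split_ifs <;> norm_num
  have hη₀s : ∑ m, η₀ m = 1 := by rw [hη₀]; simp
  have hbdd : ∀ (η : Fin (M+1) → ℝ) (k : Fin K ⊕ Fin M),
      BddAbove {s : ℝ | ∃ w : Fin d → ℝ, (∀ j, l j ≤ w j ∧ w j ≤ u j) ∧
        s = -(∑ j, c η k j * (W.mulVec w + b) j)} :=
    fun η k => inner_bddAbove (c η k) W b l u
  have hval : ∀ (η : Fin (M+1) → ℝ), (∑ m, η m = 1) → ∀ (k : Fin K ⊕ Fin M) (w : Fin d → ℝ),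
      -(∑ j, c η k j * (W.mulVec w + b) j)
        = (W.mulVec w + b) k - ∑ m, η m * (W.mulVec w + b) (a m) := by
    intro η hs k w
    rw [hc]
    exact sum_c_mul a η hs k _
  -- every member of the outer set for index kk is at least z kk - t
  have hmemlb : ∀ (kk : Fin K ⊕ Fin M) (x : ℝ),
      x ∈ {x : ℝ | ∃ η : Fin (M + 1) → ℝ,
        (∀ m, 0 ≤ η m) ∧ (∑ m, η m) = 1 ∧
        x = sSup {s : ℝ | ∃ w : Fin d → ℝ, (∀ j, l j ≤ w j ∧ w j ≤ u j) ∧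
          s = -(∑ j, c η kk j * (W.mulVec w + b) j)}} → z kk - t ≤ x := by
    rintro kk x ⟨η, hηnn, hηs, rfl⟩
    have hmem : z kk - ∑ m, η m * z (a m) ∈
        {s : ℝ | ∃ w : Fin d → ℝ, (∀ j, l j ≤ w j ∧ w j ≤ u j) ∧
          s = -(∑ j, c η kk j * (W.mulVec w + b) j)} :=
      ⟨h, hhbox, (hval η hηs kk h).symm⟩
    have h1 := le_csSup (hbdd η kk) hmem
    have h2 : ∑ m, η m * z (a m) ≤ t := by
      calc ∑ m, η m * z (a m) ≤ ∑ m, η m * t :=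
            Finset.sum_le_sum fun m _ =>
              mul_le_mul_of_nonneg_left (hm' m (Finset.mem_univ m)) (hηnn m)
        _ = t := by rw [← Finset.sum_mul, hηs, one_mul]
    linarith
  have hne : ∀ kk : Fin K ⊕ Fin M, ∃ x : ℝ, x ∈ {x : ℝ | ∃ η : Fin (M + 1) → ℝ,
      (∀ m, 0 ≤ η m) ∧ (∑ m, η m) = 1 ∧
      x = sSup {s : ℝ | ∃ w : Fin d → ℝ, (∀ j, l j ≤ w j ∧ w j ≤ u j) ∧
        s = -(∑ j, c η kk j * (W.mulVec w + b) j)}} :=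
    fun kk => ⟨_, η₀, hη₀nn, hη₀s, rfl⟩
  have hJlb : ∀ kk : Fin K ⊕ Fin M, z kk - t ≤ J kk := by
    intro kk
    rw [hJ]
    exact le_csInf (hne kk) (hmemlb kk)
  have hJy : J (Sum.inl y) ≤ 0 := by
    rw [hJ]
    refine csInf_le ⟨z (Sum.inl y) - t, fun x hx => hmemlb _ x hx⟩ ?_
    have hc0 : ∀ jj, c η₀ (Sum.inl y) jj = 0 := by
      intro jj
      rw [hc, hη₀]
      simp [ite_mul, ha0]
    refine ⟨η₀, hη₀nn, hη₀s, ?_⟩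
    have hset : {s : ℝ | ∃ w : Fin d → ℝ, (∀ j, l j ≤ w j ∧ w j ≤ u j) ∧
        s = -(∑ j, c η₀ (Sum.inl y) j * (W.mulVec w + b) j)} = {0} := by
      ext s
      simp only [Set.mem_setOf_eq, Set.mem_singleton_iff]
      constructor
      · rintro ⟨w, hw, rfl⟩; simp [hc0]
      · rintro rfl
        exact ⟨l, fun j => ⟨le_refl _, hlu j⟩, by simp [hc0]⟩
    rw [hset, csSup_singleton]
  -- reduce to the maximizing index m'
  refine le_trans (Finset.inf'_le _ (Finset.mem_univ m')) ?_
  set Se : ℝ := ∑ k ∈ Finset.univ.filter (fun k : Fin K => k ≠ y),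
      Real.exp (z (Sum.inl k)) with hSe
  have hSe0 : (0:ℝ) ≤ Se := Finset.sum_nonneg fun _ _ => (Real.exp_pos _).le
  have hD1 : 0 < Real.exp t + Se := by positivity
  have hD2 : 0 < ∑ k : Fin K, Real.exp (J (Sum.inl k)) :=
    Finset.sum_pos (fun _ _ => Real.exp_pos _) ⟨y, Finset.mem_univ y⟩
  rw [Real.log_div (Real.exp_ne_zero _) (ne_of_gt hD1),
      Real.log_div (Real.exp_ne_zero _) (ne_of_gt hD2),
      Real.log_exp, Real.log_exp, neg_sub, neg_sub]
  have key : (Real.exp t + Se) * Real.exp (-t)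
      ≤ (∑ k : Fin K, Real.exp (J (Sum.inl k))) * Real.exp (-(J (Sum.inl y))) := by
    have lhs_eq : (Real.exp t + Se) * Real.exp (-t)
        = 1 + ∑ k ∈ Finset.univ.erase y, Real.exp (z (Sum.inl k) - t) := by
      rw [hSe, Finset.filter_ne', add_mul, ← Real.exp_add, add_neg_cancel, Real.exp_zero,
        Finset.sum_mul]
      congr 1
      exact Finset.sum_congr rfl fun k _ => by
        rw [← Real.exp_add, sub_eq_add_neg]
    have rhs_eq : (∑ k : Fin K, Real.exp (J (Sum.inl k))) * Real.exp (-(J (Sum.inl y)))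
        = 1 + ∑ k ∈ Finset.univ.erase y, Real.exp (J (Sum.inl k) - J (Sum.inl y)) := by
      rw [Finset.sum_mul, ← Finset.add_sum_erase _ _ (Finset.mem_univ y),
        ← Real.exp_add, add_neg_cancel, Real.exp_zero]
      congr 1
      exact Finset.sum_congr rfl fun k _ => by
        rw [← Real.exp_add, sub_eq_add_neg]
    rw [lhs_eq, rhs_eq]
    refine add_le_add_right (Finset.sum_le_sum fun k _ => ?_) 1
    have h1 := hJlb (Sum.inl k)
    exact Real.exp_le_exp.mpr (by linarith)
  calc Real.log (Real.exp t + Se) - t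
      = Real.log ((Real.exp t + Se) * Real.exp (-t)) := by
        rw [Real.log_mul (ne_of_gt hD1) (Real.exp_ne_zero _), Real.log_exp]; ring
    _ ≤ Real.log ((∑ k : Fin K, Real.exp (J (Sum.inl k))) * Real.exp (-(J (Sum.inl y)))) :=
        Real.log_le_log (by positivity) key
    _ = Real.log (∑ k : Fin K, Real.exp (J (Sum.inl k))) - J (Sum.inl y) := by
        rw [Real.log_mul (ne_of_gt hD2) (Real.exp_ne_zero _), Real.log_exp]; ring
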